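/- arXiv:1001.4028 — 4 statements merged into one kernel-verified Lean document; each statement's English description precedes it below -/
import Mathlib

section
/- Let G be a finite graph with m vertices and combinatorial Laplacian Δ_G, let n ≥ 1, and let z be a nonzero complex number. Let H_n = G × Z_n and let Δ be the line-bundle Laplacian on H_n for the connection with parallel transport 1 on all edges except the edges from (x,n−1) to (x,0), which have parallel transport z (and z^{-1} in the reverse direction). Then det Δ = Π_{ζ : ζ^n = z} det(Δ_G + (2 − ζ − ζ^{-1}) I_m), the product over all n-th roots ζ of z. -/
/-!
Statement 9: for the product graph `H_n = G × Z_n` with the flat line bundle having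
parallel transport `z` on the seam edges `(x, n−1) → (x, 0)` and `1` elsewhere,
det Δ = Π_{ζ^n = z} det(Δ_G + (2 − ζ − ζ⁻¹) I).
The matrix below is exactly the line-bundle Laplacian of `H_n` (written additively so
that it is also correct for the multigraphs arising when `n ≤ 2`): the diagonal entry is
`deg_G(x) + 2`, and the entry at a pair of adjacent vertices is minus the parallel
transport from the second to the first.
-/

open Finset

variable {V : Type*}

/-- The standard combinatorial Laplacian of `G`. -/
def stdLaplacian [Fintype V] [DecidableEq V] (G : SimpleGraph V) [DecidableRel G.Adj] :
    Matrix V V ℂ :=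
  Matrix.of fun v v' => if v = v' then (G.degree v : ℂ) else if G.Adj v v' then -1 else 0

section Aux

open Matrix Polynomial Kronecker

variable {n : ℕ} [NeZero n]

private lemma zmodValNegOne : (-1 : ZMod n).val = n - 1 := by
  obtain ⟨m, rfl⟩ : ∃ m, n = m + 1 := ⟨n - 1, (Nat.succ_pred_eq_of_pos (NeZero.pos n)).symm⟩
  simpa using ZMod.val_neg_one m

private lemma zmodValAddOne {i : ZMod n} (h : i ≠ -1) : (i + 1).val = i.val + 1 := by
  have h1 : i.val + 1 < n := by
    rcases Nat.lt_or_ge (i.val + 1) n with h' | h'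
    · exact h'
    · exfalso
      have hval : i.val = n - 1 := by have := i.val_lt; omega
      exact h (ZMod.val_injective n (by rw [hval, zmodValNegOne]))
  have h2 : (i + 1 : ZMod n) = ((i.val + 1 : ℕ) : ZMod n) := by
    push_cast
    rw [ZMod.natCast_rightInverse i]
  rw [h2, ZMod.val_cast_of_lt h1]

private lemma zmodValProd {M : Type*} [CommMonoid M] (f : ℕ → M) :
    ∏ k : ZMod n, f (ZMod.val k) = ∏ i ∈ range n, f i :=
  Finset.prod_bij' (fun k _ => ZMod.val k) (fun i _ => (i : ZMod n))
    (fun k _ => mem_range.mpr k.val_lt)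
    (fun i _ => mem_univ _)
    (fun k _ => ZMod.natCast_rightInverse k)
    (fun i hi => ZMod.val_cast_of_lt (mem_range.mp hi))
    (fun k _ => rfl)

private lemma zmodValSum {M : Type*} [AddCommMonoid M] (f : ℕ → M) :
    ∑ k : ZMod n, f (ZMod.val k) = ∑ i ∈ range n, f i :=
  Finset.sum_bij' (fun k _ => ZMod.val k) (fun i _ => (i : ZMod n))
    (fun k _ => mem_range.mpr k.val_lt)
    (fun i _ => mem_univ _)
    (fun k _ => ZMod.natCast_rightInverse k)
    (fun i hi => ZMod.val_cast_of_lt (mem_range.mp hi))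
    (fun k _ => rfl)

private lemma geomSumZMod {x : ℂ} (hx : x ≠ 1) (hxn : x ^ n = 1) :
    ∑ k : ZMod n, x ^ (ZMod.val k) = 0 := by
  rw [zmodValSum (fun i => x ^ i), geom_sum_eq hx, hxn, sub_self, zero_div]

/-- Key scalar identity A : action of the forward shift on the eigenvector. -/
private lemma keyA {z ζ : ℂ} (hζ : ζ ≠ 0) (hzn : ζ ^ n = z) (j : ZMod n) :
    (if j = -1 then z⁻¹ else 1) * ζ⁻¹ ^ (j + 1).val = ζ⁻¹ * ζ⁻¹ ^ j.val := by
  by_cases h : j = -1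
  · subst h
    rw [if_pos rfl, neg_add_cancel, ZMod.val_zero, pow_zero, mul_one, zmodValNegOne, ← pow_succ',
      Nat.sub_add_cancel (Nat.one_le_iff_ne_zero.mpr (NeZero.ne n)), ← hzn, inv_pow]
  · rw [if_neg h, one_mul, zmodValAddOne h, pow_succ']

/-- Key scalar identity B : action of the backward shift on the eigenvector. -/
private lemma keyB {z ζ : ℂ} (hζ : ζ ≠ 0) (hzn : ζ ^ n = z) (j : ZMod n) :
    (if j = 0 then z else 1) * ζ⁻¹ ^ (j - 1).val = ζ * ζ⁻¹ ^ j.val := by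
  by_cases h : j = 0
  · subst h
    rw [if_pos rfl, zero_sub, zmodValNegOne, ZMod.val_zero, pow_zero, mul_one, ← hzn]
    have hn : n = (n - 1) + 1 := (Nat.succ_pred_eq_of_pos (NeZero.pos n)).symm
    rw [hn]
    rw [Nat.add_sub_cancel, pow_succ, mul_comm, ← mul_assoc, ← mul_pow, inv_mul_cancel₀ hζ,
      one_pow, one_mul]
  · have hne : j - 1 ≠ -1 := by
      intro hc
      exact h (by rw [← sub_add_cancel j 1, hc, neg_add_cancel])
    have hval : j.val = (j - 1).val + 1 := by
      conv_lhs => rw [← sub_add_cancel j 1]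
      exact zmodValAddOne hne
    rw [if_neg h, one_mul, hval, pow_succ]
    field_simp

end Aux

theorem det_cylinder_lineLaplacian [Fintype V] [DecidableEq V]
    (G : SimpleGraph V) [DecidableRel G.Adj]
    (n : ℕ) [NeZero n] (z : ℂ) (hz : z ≠ 0) :
    (Matrix.of fun a b : V × ZMod n =>
        (if a = b then (G.degree a.1 : ℂ) + 2 else 0)
          - (if a.1 = b.1 ∧ b.2 = a.2 + 1 then (if a.2 = -1 then z⁻¹ else 1) else 0)
          - (if a.1 = b.1 ∧ a.2 = b.2 + 1 then (if b.2 = -1 then z else 1) else 0)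
          - (if a.2 = b.2 ∧ G.Adj a.1 b.1 then 1 else 0)).det
      = ((Polynomial.nthRoots n z).map fun ζ =>
          (stdLaplacian G + (2 - ζ - ζ⁻¹) • (1 : Matrix V V ℂ)).det).prod := by
  classical
  open Matrix Polynomial Kronecker in
  -- setup : primitive root ω and an n-th root w of z
  obtain ⟨w, hw⟩ := IsAlgClosed.exists_pow_nat_eq z (NeZero.pos n)
  set ω : ℂ := Complex.exp (2 * Real.pi * Complex.I / n) with hωdef
  have hω : IsPrimitiveRoot ω n := Complex.isPrimitiveRoot_exp n (NeZero.ne n)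
  have hω0 : ω ≠ 0 := hω.ne_zero (NeZero.ne n)
  have hw0 : w ≠ 0 := by
    intro h; apply hz; rw [← hw, h, zero_pow (NeZero.ne n)]
  set ζ : ZMod n → ℂ := fun k => ω ^ k.val * w with hζdef
  have hζ0 : ∀ k, ζ k ≠ 0 := fun k => mul_ne_zero (pow_ne_zero _ hω0) hw0
  have hζn : ∀ k, ζ k ^ n = z := by
    intro k
    show (ω ^ k.val * w) ^ n = z
    rw [mul_pow, ← pow_mul, mul_comm k.val n, pow_mul, hω.pow_eq_one, one_pow, one_mul, hw]
  -- the circulant factor, Fourier matrix and its inverse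
  set C : Matrix (ZMod n) (ZMod n) ℂ := Matrix.of fun j k =>
    (if j = k then (2 : ℂ) else 0)
      - (if k = j + 1 then (if j = -1 then z⁻¹ else 1) else 0)
      - (if j = k + 1 then (if k = -1 then z else 1) else 0) with hCdef
  set F : Matrix (ZMod n) (ZMod n) ℂ := Matrix.of fun j k => (ζ k)⁻¹ ^ j.val with hFdef
  set Fi : Matrix (ZMod n) (ZMod n) ℂ :=
    Matrix.of fun j k => (n : ℂ)⁻¹ * (ζ j) ^ k.val with hFidef
  set c : ZMod n → ℂ := fun k => 2 - ζ k - (ζ k)⁻¹ with hcdef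
  set L : Matrix V V ℂ := stdLaplacian G with hLdef
  set M : Matrix (V × ZMod n) (V × ZMod n) ℂ := Matrix.of fun a b : V × ZMod n =>
        (if a = b then (G.degree a.1 : ℂ) + 2 else 0)
          - (if a.1 = b.1 ∧ b.2 = a.2 + 1 then (if a.2 = -1 then z⁻¹ else 1) else 0)
          - (if a.1 = b.1 ∧ a.2 = b.2 + 1 then (if b.2 = -1 then z else 1) else 0)
          - (if a.2 = b.2 ∧ G.Adj a.1 b.1 then 1 else 0) with hMdef
  set B : ZMod n → Matrix V V ℂ := fun k => L + (2 - ζ k - (ζ k)⁻¹) • 1 with hBdef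
  -- decomposition of M as a Kronecker sum
  have hMdecomp : M = L ⊗ₖ (1 : Matrix (ZMod n) (ZMod n) ℂ) + (1 : Matrix V V ℂ) ⊗ₖ C := by
    ext ⟨x, j⟩ ⟨y, k⟩
    simp only [hMdef, hCdef, hLdef, stdLaplacian, Matrix.add_apply, Matrix.kroneckerMap_apply,
      Matrix.one_apply, Matrix.of_apply, Prod.mk.injEq]
    by_cases hxy : x = y
    · subst hxy
      simp only [if_pos rfl, eq_self_iff_true, true_and, G.irrefl, and_false, if_false]
      by_cases hjk : j = k <;> simp [hjk] <;> ring
    · simp only [if_neg hxy, hxy, false_and, if_false, sub_zero, zero_mul, zero_add]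
      by_cases hjk : j = k
      · simp only [hjk, if_pos rfl, mul_one, and_true, true_and]
        split_ifs <;> ring
      · simp [hjk, hxy]
  -- the circulant acts diagonally in the Fourier basis
  have hCF : C * F = F * Matrix.diagonal c := by
    ext j k
    rw [Matrix.mul_apply, Matrix.mul_diagonal]
    have hptw : ∀ j' : ZMod n, C j j' * F j' k
        = (if j = j' then (2:ℂ) * ((ζ k)⁻¹ ^ j'.val) else 0)
          - (if j' = j + 1 then (if j = -1 then z⁻¹ else 1) * ((ζ k)⁻¹ ^ j'.val) else 0)
          - (if j' = j - 1 then (if j = 0 then z else 1) * ((ζ k)⁻¹ ^ j'.val) else 0) := by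
      intro j'
      simp only [hCdef, hFdef, Matrix.of_apply]
      by_cases h3 : j = j' + 1
      · have hj' : j' = j - 1 := by rw [h3, add_sub_cancel_right]
        have hiff : (j' = -1) = (j = 0) := by
          apply propext
          subst h3
          constructor
          · rintro rfl; rw [neg_add_cancel]
          · intro h0; exact eq_neg_of_add_eq_zero_left h0
        rw [if_pos h3, if_pos hj']
        simp only [hiff]
        split_ifs <;> ring
      · have hj' : ¬ (j' = j - 1) := fun hc => h3 (by rw [hc, sub_add_cancel])
        rw [if_neg h3, if_neg hj']
        split_ifs <;> ring
    rw [Finset.sum_congr rfl (fun j' _ => hptw j'), Finset.sum_sub_distrib,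
      Finset.sum_sub_distrib,
      Finset.sum_ite_eq univ j (fun j' => (2:ℂ) * ((ζ k)⁻¹ ^ j'.val)),
      Finset.sum_ite_eq' univ (j + 1)
        (fun j' => (if j = -1 then z⁻¹ else 1) * ((ζ k)⁻¹ ^ j'.val)),
      Finset.sum_ite_eq' univ (j - 1)
        (fun j' => (if j = 0 then z else 1) * ((ζ k)⁻¹ ^ j'.val))]
    simp only [mem_univ, if_true]
    rw [keyA (hζ0 k) (hζn k) j, keyB (hζ0 k) (hζn k) j, hFdef]
    simp only [Matrix.of_apply, hcdef]
    ring
  -- the Fourier matrix is invertible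
  have hFFi : F * Fi = 1 := by
    ext j k
    rw [Matrix.mul_apply, Matrix.one_apply]
    by_cases hjk : j = k
    · subst hjk
      have : ∀ j' : ZMod n, F j j' * Fi j' j = (n : ℂ)⁻¹ := by
        intro j'
        simp only [hFdef, hFidef, Matrix.of_apply]
        rw [mul_comm ((n : ℂ)⁻¹) _, ← mul_assoc, ← mul_pow, inv_mul_cancel₀ (hζ0 j'), one_pow,
          one_mul]
      rw [Finset.sum_congr rfl (fun j' _ => this j')]
      simp only [Finset.sum_const, Finset.card_univ, ZMod.card, nsmul_eq_mul, if_pos rfl]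
      have hn0 : (n : ℂ) ≠ 0 := Nat.cast_ne_zero.mpr (NeZero.ne n)
      field_simp
      rw [if_pos trivial]
    · rw [if_neg hjk]
      set d : ℤ := (k.val : ℤ) - (j.val : ℤ) with hddef
      have hd0 : d ≠ 0 := by
        intro hc
        apply hjk
        apply ZMod.val_injective
        omega
      have hxne : ω ^ d ≠ 1 := by
        intro hc
        rcases (hω.zpow_eq_one_iff_dvd d).mp hc with ⟨e, he⟩
        have hj := j.val_lt
        have hk := k.val_lt
        refine hd0 (Int.eq_zero_of_abs_lt_dvd ⟨e, he⟩ ?_)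
        rw [abs_lt]
        omega
      have hxn : (ω ^ d) ^ n = 1 := by
        rw [← zpow_natCast (ω ^ d) n, ← _root_.zpow_mul, mul_comm, _root_.zpow_mul, zpow_natCast,
          hω.pow_eq_one, _root_.one_zpow]
      have hterm : ∀ j' : ZMod n, F j j' * Fi j' k
          = (n : ℂ)⁻¹ * w ^ d * (ω ^ d) ^ (j'.val) := by
        intro j'
        have hζ' : (ζ j') ≠ 0 := hζ0 j'
        have h1 : F j j' * Fi j' k
            = (n:ℂ)⁻¹ * ((ζ j') ^ ((k.val : ℤ)) * (ζ j') ^ (-(j.val : ℤ))) := by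
          simp only [hFdef, hFidef, Matrix.of_apply, inv_pow, _root_.zpow_neg, zpow_natCast]
          ring
        rw [h1, ← zpow_add₀ hζ', show (k.val:ℤ) + (-(j.val:ℤ)) = d from by omega]
        have h2 : (ζ j') ^ d = (ω ^ d) ^ (j'.val) * w ^ d := by
          show (ω ^ j'.val * w) ^ d = _
          rw [mul_zpow, ← zpow_natCast ω j'.val, ← _root_.zpow_mul,
            mul_comm ((j'.val : ℤ)) d, _root_.zpow_mul, zpow_natCast]
        rw [h2]
        ring
      rw [Finset.sum_congr rfl (fun j' _ => hterm j'), ← Finset.mul_sum,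
        geomSumZMod hxne hxn, mul_zero]
  -- assemble the block diagonalization
  set P : Matrix (V × ZMod n) (V × ZMod n) ℂ := (1 : Matrix V V ℂ) ⊗ₖ F with hPdef
  set Q : Matrix (V × ZMod n) (V × ZMod n) ℂ := (1 : Matrix V V ℂ) ⊗ₖ Fi with hQdef
  have hPQ : P * Q = 1 := by
    rw [hPdef, hQdef, ← Matrix.mul_kronecker_mul, one_mul, hFFi, Matrix.one_kronecker_one]
  have hDg : Matrix.blockDiagonal B
      = L ⊗ₖ (1 : Matrix (ZMod n) (ZMod n) ℂ) + (1 : Matrix V V ℂ) ⊗ₖ Matrix.diagonal c := by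
    ext ⟨x, j⟩ ⟨y, k⟩
    simp only [Matrix.blockDiagonal_apply, hBdef, Matrix.add_apply, Matrix.kroneckerMap_apply,
      Matrix.one_apply, Matrix.diagonal_apply, Matrix.smul_apply, smul_eq_mul, hcdef]
    by_cases hjk : j = k <;> by_cases hxy : x = y <;> simp [hjk, hxy] <;> ring
  have hMP : M * P = P * Matrix.blockDiagonal B := by
    rw [hMdecomp, hDg, hPdef, add_mul, mul_add, ← Matrix.mul_kronecker_mul,
      ← Matrix.mul_kronecker_mul, ← Matrix.mul_kronecker_mul, ← Matrix.mul_kronecker_mul,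
      one_mul, one_mul, mul_one, mul_one, one_mul, hCF]
  -- conclude on determinants
  have hM : M = P * Matrix.blockDiagonal B * Q := by
    calc M = M * (P * Q) := by rw [hPQ, mul_one]
    _ = (M * P) * Q := by rw [mul_assoc]
    _ = P * Matrix.blockDiagonal B * Q := by rw [hMP]
  have hdet : M.det = (Matrix.blockDiagonal B).det := by
    rw [hM, Matrix.det_mul, Matrix.det_mul]
    have : P.det * Q.det = 1 := by rw [← Matrix.det_mul, hPQ, Matrix.det_one]
    calc P.det * (Matrix.blockDiagonal B).det * Q.det
        = (Matrix.blockDiagonal B).det * (P.det * Q.det) := by ring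
    _ = (Matrix.blockDiagonal B).det := by rw [this, mul_one]
  -- identify the right-hand side
  have hroots : Polynomial.nthRoots n z = (Multiset.range n).map (fun i => ω ^ i * w) :=
    hω.nthRoots_eq hw
  rw [hdet, Matrix.det_blockDiagonal, hroots, Multiset.map_map]
  have hrhs : ((Multiset.range n).map
        ((fun ζ => (stdLaplacian G + (2 - ζ - ζ⁻¹) • (1 : Matrix V V ℂ)).det)
          ∘ (fun i => ω ^ i * w))).prod
      = ∏ i ∈ range n,
          (L + (2 - ω ^ i * w - (ω ^ i * w)⁻¹) • (1 : Matrix V V ℂ)).det := by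
    rw [Finset.prod_eq_multiset_prod, ← Finset.range_val n]
    rfl
  rw [hrhs, ← zmodValProd
    (fun i => (L + (2 - ω ^ i * w - (ω ^ i * w)⁻¹) • (1 : Matrix V V ℂ)).det)]
end

section
/- Let m, n ≥ 1 and let z, w be nonzero complex numbers. Let Δ be the linear operator on ℂ^{(ℤ/mℤ)×(ℤ/nℤ)} defined by (Δf)(x,y) = 2 f(x,y) − α(x) f(x+1,y) − β(y) f(x,y+1), where α(x) = z if x = m−1 and α(x) = 1 otherwise, and β(y) = w if y = n−1 and β(y) = 1 otherwise. Then det Δ = Π_{u : u^m = z} Π_{v : v^n = w} (2 − u − v), the product over all m-th roots u of z and all n-th roots v of w. -/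
/-!
Statement 14: for the line-bundle Laplacian of the m×n torus grid with monodromies
`z` and `w` (realized by parallel transports `z` on east edges out of column `m−1`,
`w` on north edges out of row `n−1`, and `1` elsewhere, each directed edge of the
north/east directed grid having weight 1),
det Δ = Π_{u^m = z} Π_{v^n = w} (2 − u − v).
-/

open Polynomial Matrix

lemma zmod_val_neg_one_add_one (m : ℕ) [NeZero m] : ((-1 : ZMod m)).val + 1 = m := by
  have hcast : ((((-1 : ZMod m)).val + 1 : ℕ) : ZMod m) = 0 := by
    push_cast [ZMod.natCast_val, ZMod.cast_id]
    ring
  have hdvd : m ∣ ((-1 : ZMod m)).val + 1 := (ZMod.natCast_eq_zero_iff _ _).mp hcast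
  have hlt : ((-1 : ZMod m)).val < m := ZMod.val_lt _
  have h1 : m ≤ ((-1 : ZMod m)).val + 1 := Nat.le_of_dvd (Nat.succ_pos _) hdvd
  omega

lemma zmod_val_add_one {m : ℕ} [NeZero m] {x : ZMod m} (hx : x ≠ -1) :
    (x + 1).val = x.val + 1 := by
  have hrepr : x + 1 = ((x.val + 1 : ℕ) : ZMod m) := by
    push_cast [ZMod.natCast_val, ZMod.cast_id]
    ring
  have hne : x.val + 1 ≠ m := by
    intro h
    apply hx
    have : x + 1 = 0 := by rw [hrepr, h, ZMod.natCast_self]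
    linear_combination this
  have hlt : x.val + 1 < m := lt_of_le_of_ne (ZMod.val_lt x) hne
  rw [hrepr, ZMod.val_natCast, Nat.mod_eq_of_lt hlt]

lemma key_twist {m : ℕ} [NeZero m] (x : ZMod m) {u z : ℂ} (h : u ^ m = z) :
    (if x = (m : ZMod m) - 1 then z else 1) * u ^ (x + 1).val = u * u ^ x.val := by
  have hm : (m : ZMod m) - 1 = -1 := by rw [ZMod.natCast_self, zero_sub]
  rw [hm]
  by_cases hx : x = -1
  · subst hx
    rw [if_pos rfl, neg_add_cancel, ZMod.val_zero, pow_zero, mul_one,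
      ← pow_succ', zmod_val_neg_one_add_one m, h]
  · rw [if_neg hx, one_mul, zmod_val_add_one hx]
    exact pow_succ' u _

lemma nthRoots_eq_map {m : ℕ} [NeZero m] {z z₀ ζ : ℂ} (hz : z ≠ 0) (hz₀ : z₀ ^ m = z)
    (hζ : IsPrimitiveRoot ζ m) :
    nthRoots m z = Multiset.map (fun j : ZMod m => z₀ * ζ ^ j.val) Finset.univ.val := by
  have hm : 0 < m := Nat.pos_of_ne_zero (NeZero.ne m)
  have hz₀0 : z₀ ≠ 0 := fun h => hz (by rw [← hz₀, h, zero_pow (NeZero.ne m)])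
  have hinj : Function.Injective (fun j : ZMod m => z₀ * ζ ^ j.val) := by
    intro a b hab
    exact ZMod.val_injective m (hζ.pow_inj a.val_lt b.val_lt (mul_left_cancel₀ hz₀0 hab))
  refine (Multiset.eq_of_le_of_card_le ?_ ?_).symm
  · refine (Multiset.le_iff_subset (Finset.univ.nodup.map hinj)).mpr ?_
    intro x hx
    obtain ⟨j, _, rfl⟩ := Multiset.mem_map.mp hx
    rw [mem_nthRoots hm, mul_pow, hz₀, ← pow_mul, mul_comm j.val m, pow_mul,
      hζ.pow_eq_one, one_pow, mul_one]
  · calc Multiset.card (nthRoots m z) ≤ m := card_nthRoots m z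
      _ = Multiset.card (Multiset.map (fun j : ZMod m => z₀ * ζ ^ j.val) Finset.univ.val) := by
        rw [Multiset.card_map]
        simp [ZMod.card]

lemma det_powval_ne_zero {m : ℕ} [NeZero m] {c : ZMod m → ℂ} (hc : Function.Injective c) :
    (Matrix.of fun x j : ZMod m => c j ^ x.val).det ≠ 0 := by
  let e : Fin m ≃ ZMod m :=
    { toFun := fun i => (i : ZMod m)
      invFun := fun x => ⟨x.val, x.val_lt⟩
      left_inv := fun i => by
        ext
        simp [ZMod.val_natCast, Nat.mod_eq_of_lt i.isLt]
      right_inv := fun x => by simp [ZMod.natCast_val, ZMod.cast_id] }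
  rw [← Matrix.det_submatrix_equiv_self e]
  have he : ((Matrix.of fun x j : ZMod m => c j ^ x.val).submatrix e e)
      = (Matrix.vandermonde fun i => c (e i)).transpose := by
    ext i j
    simp [Matrix.vandermonde, e, ZMod.val_natCast, Nat.mod_eq_of_lt i.isLt]
  rw [he, Matrix.det_transpose]
  exact Matrix.det_vandermonde_ne_zero_iff.mpr (hc.comp e.injective)

lemma aux_det (m n : ℕ) [NeZero m] [NeZero n] (z w z₀ w₀ ζ ξ : ℂ)
    (hz₀ : z₀ ^ m = z) (hw₀ : w₀ ^ n = w)
    (hζ : IsPrimitiveRoot ζ m) (hξ : IsPrimitiveRoot ξ n)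
    (u : ZMod m → ℂ) (v : ZMod n → ℂ)
    (hu : u = fun j => z₀ * ζ ^ j.val) (hv : v = fun k => w₀ * ξ ^ k.val) :
    (Matrix.of fun a b : ZMod m × ZMod n =>
        (if a = b then (2 : ℂ) else 0)
          - (if b.1 = a.1 + 1 ∧ b.2 = a.2 then (if a.1 = (m : ZMod m) - 1 then z else 1) else 0)
          - (if b.1 = a.1 ∧ b.2 = a.2 + 1 then (if a.2 = (n : ZMod n) - 1 then w else 1) else 0)) *
      (Matrix.of fun a b : ZMod m × ZMod n => u b.1 ^ a.1.val * v b.2 ^ a.2.val)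
    = (Matrix.of fun a b : ZMod m × ZMod n => u b.1 ^ a.1.val * v b.2 ^ a.2.val) *
      Matrix.diagonal (fun b => 2 - u b.1 - v b.2) := by
  have hum : ∀ j : ZMod m, u j ^ m = z := by
    intro j
    rw [hu]
    dsimp only
    rw [mul_pow, hz₀, ← pow_mul, mul_comm j.val m, pow_mul, hζ.pow_eq_one, one_pow, mul_one]
  have hvn : ∀ k : ZMod n, v k ^ n = w := by
    intro k
    rw [hv]
    dsimp only
    rw [mul_pow, hw₀, ← pow_mul, mul_comm k.val n, pow_mul, hξ.pow_eq_one, one_pow, mul_one]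
  ext a b
  rw [Matrix.mul_apply, Matrix.mul_diagonal]
  simp only [Matrix.of_apply, sub_mul]
  rw [Finset.sum_sub_distrib, Finset.sum_sub_distrib]
  have h1 : (∑ c : ZMod m × ZMod n, (if a = c then (2:ℂ) else 0) *
      (u b.1 ^ c.1.val * v b.2 ^ c.2.val))
      = 2 * (u b.1 ^ a.1.val * v b.2 ^ a.2.val) := by
    simp [ite_mul]
  have h2 : (∑ c : ZMod m × ZMod n,
      (if c.1 = a.1 + 1 ∧ c.2 = a.2 then (if a.1 = (m : ZMod m) - 1 then z else 1) else 0) *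
      (u b.1 ^ c.1.val * v b.2 ^ c.2.val))
      = (if a.1 = (m : ZMod m) - 1 then z else 1) *
        (u b.1 ^ (a.1 + 1).val * v b.2 ^ a.2.val) := by
    have hc : ∀ c : ZMod m × ZMod n, (c.1 = a.1 + 1 ∧ c.2 = a.2) ↔ c = (a.1 + 1, a.2) := by
      intro c
      rw [Prod.ext_iff]
    simp_rw [hc]
    simp [ite_mul]
  have h3 : (∑ c : ZMod m × ZMod n,
      (if c.1 = a.1 ∧ c.2 = a.2 + 1 then (if a.2 = (n : ZMod n) - 1 then w else 1) else 0) *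
      (u b.1 ^ c.1.val * v b.2 ^ c.2.val))
      = (if a.2 = (n : ZMod n) - 1 then w else 1) *
        (u b.1 ^ a.1.val * v b.2 ^ (a.2 + 1).val) := by
    have hc : ∀ c : ZMod m × ZMod n, (c.1 = a.1 ∧ c.2 = a.2 + 1) ↔ c = (a.1, a.2 + 1) := by
      intro c
      rw [Prod.ext_iff]
    simp_rw [hc]
    simp [ite_mul]
  rw [h1, h2, h3]
  have k1 := key_twist a.1 (hum b.1)
  have k2 := key_twist a.2 (hvn b.2)
  linear_combination (- (v b.2 ^ a.2.val)) * k1 - (u b.1 ^ a.1.val) * k2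

theorem det_torus_grid_laplacian (m n : ℕ) [NeZero m] [NeZero n]
    (z w : ℂ) (hz : z ≠ 0) (hw : w ≠ 0) :
    (Matrix.of fun a b : ZMod m × ZMod n =>
        (if a = b then (2 : ℂ) else 0)
          - (if b.1 = a.1 + 1 ∧ b.2 = a.2 then (if a.1 = (m : ZMod m) - 1 then z else 1) else 0)
          - (if b.1 = a.1 ∧ b.2 = a.2 + 1 then (if a.2 = (n : ZMod n) - 1 then w else 1) else 0)).det
      = ((Polynomial.nthRoots m z).map fun u =>
          ((Polynomial.nthRoots n w).map fun v => 2 - u - v).prod).prod := by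
  classical
  obtain ⟨z₀, hz₀⟩ := IsAlgClosed.exists_pow_nat_eq z (Nat.pos_of_ne_zero (NeZero.ne m))
  obtain ⟨w₀, hw₀⟩ := IsAlgClosed.exists_pow_nat_eq w (Nat.pos_of_ne_zero (NeZero.ne n))
  have hζ := Complex.isPrimitiveRoot_exp m (NeZero.ne m)
  have hξ := Complex.isPrimitiveRoot_exp n (NeZero.ne n)
  set u : ZMod m → ℂ := fun j => z₀ * Complex.exp (2 * Real.pi * Complex.I / m) ^ j.val with hu
  set v : ZMod n → ℂ := fun k => w₀ * Complex.exp (2 * Real.pi * Complex.I / n) ^ k.val with hv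
  have hz₀0 : z₀ ≠ 0 := fun h => hz (by rw [← hz₀, h, zero_pow (NeZero.ne m)])
  have hw₀0 : w₀ ≠ 0 := fun h => hw (by rw [← hw₀, h, zero_pow (NeZero.ne n)])
  have huinj : Function.Injective u := by
    intro a b hab
    exact ZMod.val_injective m (hζ.pow_inj a.val_lt b.val_lt (mul_left_cancel₀ hz₀0 hab))
  have hvinj : Function.Injective v := by
    intro a b hab
    exact ZMod.val_injective n (hξ.pow_inj a.val_lt b.val_lt (mul_left_cancel₀ hw₀0 hab))
  have hPD := aux_det m n z w z₀ w₀ _ _ hz₀ hw₀ hζ hξ u v hu hv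
  set P : Matrix (ZMod m × ZMod n) (ZMod m × ZMod n) ℂ :=
    Matrix.of fun a b => u b.1 ^ a.1.val * v b.2 ^ a.2.val with hP
  have hPdet : P.det ≠ 0 := by
    have hk : P = Matrix.kroneckerMap (· * ·)
        (Matrix.of fun x j : ZMod m => u j ^ x.val)
        (Matrix.of fun y k : ZMod n => v k ^ y.val) := by
      ext ⟨x, y⟩ ⟨j, k⟩
      rfl
    rw [hk, Matrix.det_kronecker]
    exact mul_ne_zero (pow_ne_zero _ (det_powval_ne_zero huinj))
      (pow_ne_zero _ (det_powval_ne_zero hvinj))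
  have hdets := congrArg Matrix.det hPD
  rw [Matrix.det_mul, Matrix.det_mul, Matrix.det_diagonal] at hdets
  have hmain : (Matrix.of fun a b : ZMod m × ZMod n =>
        (if a = b then (2 : ℂ) else 0)
          - (if b.1 = a.1 + 1 ∧ b.2 = a.2 then (if a.1 = (m : ZMod m) - 1 then z else 1) else 0)
          - (if b.1 = a.1 ∧ b.2 = a.2 + 1 then (if a.2 = (n : ZMod n) - 1 then w else 1) else 0)).det
      = ∏ b : ZMod m × ZMod n, (2 - u b.1 - v b.2) :=
    mul_right_cancel₀ hPdet (by rw [hdets, mul_comm])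
  rw [hmain, nthRoots_eq_map hz hz₀ hζ, nthRoots_eq_map hw hw₀ hξ]
  simp only [Multiset.map_map, Function.comp]
  rw [Fintype.prod_prod_type]
  rw [Finset.prod_eq_multiset_prod]
  congr 1
end

section
/- For every integer ℓ ≥ 1 and every nonzero complex number z: 2 − z^ℓ − z^{−ℓ} = Σ_{m=1}^{ℓ} (ℓ/m) · binom(m+ℓ−1, 2m−1) · (−1)^{m+1} · (2 − z − z^{−1})^m. -/
/-!
Statement 15: for every integer ℓ ≥ 1 and z ∈ ℂ*,
2 − z^ℓ − z^{−ℓ} = Σ_{m=1}^{ℓ} (ℓ/m)·binom(m+ℓ−1, 2m−1)·(−1)^{m+1}·(2 − z − z⁻¹)^m.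
-/

lemma pascal3 (n k : ℕ) :
    (n+k+1+1+1).choose (2*k+1+1) + (n+k+1).choose (2*k+1+1)
      = 2 * (n+k+1+1).choose (2*k+1+1) + (n+k+1).choose (2*k) := by
  rw [Nat.choose_succ_succ (n+k+1+1) (2*k+1), Nat.choose_succ_succ (n+k+1) (2*k),
      Nat.choose_succ_succ (n+k+1) (2*k+1)]
  ring

lemma absorb (L M : ℕ) :
    (L+1) * (L+M+1).choose (2*M+1)
      = (M+1) * ((L+M+1+1).choose (2*M+1+1) + (L+M+1).choose (2*M+1+1)) := by
  set C := (L+M+1).choose (2*M+1) with hC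
  set D := (L+M+1).choose (2*M+1+1) with hD
  have hp : (L+M+1+1).choose (2*M+1+1) = C + D := Nat.choose_succ_succ _ _
  have hr : D * (2*M+1+1) = C * (L+M+1 - (2*M+1)) := Nat.choose_succ_right_eq _ _
  rw [hp]
  rcases le_or_gt M L with h | h
  · obtain ⟨d, rfl⟩ : ∃ d, L = M + d := ⟨L - M, by omega⟩
    have h2 : M+d+M+1 - (2*M+1) = d := by omega
    rw [h2] at hr
    nlinarith [hr]
  · have hz : C = 0 := by rw [hC]; exact Nat.choose_eq_zero_of_lt (by omega)
    have hz2 : D = 0 := by rw [hD]; exact Nat.choose_eq_zero_of_lt (by omega)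
    simp [hz, hz2]

noncomputable def Tsum (w : ℂ) (n : ℕ) : ℂ :=
  ∑ m ∈ Finset.range (n+1), (-1)^m * ((n+m).choose (2*m) : ℂ) * w^m

lemma Trec (w : ℂ) (n : ℕ) :
    Tsum w (n+2) + Tsum w n + w * Tsum w (n+1) = 2 * Tsum w (n+1) := by
  have hTn : Tsum w n = ∑ m ∈ Finset.range (n+3), (-1)^m * ((n+m).choose (2*m) : ℂ) * w^m := by
    rw [show n+3 = (n+1)+1+1 from rfl, Finset.sum_range_succ, Finset.sum_range_succ,
        Nat.choose_eq_zero_of_lt (by omega), Nat.choose_eq_zero_of_lt (by omega)]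
    simp [Tsum]
  have hT1 : Tsum w (n+1)
      = ∑ m ∈ Finset.range (n+3), (-1)^m * ((n+1+m).choose (2*m) : ℂ) * w^m := by
    rw [show n+3 = (n+2)+1 from rfl, Finset.sum_range_succ,
        Nat.choose_eq_zero_of_lt (by omega)]
    simp [Tsum]
  have hw : w * Tsum w (n+1) =
      ∑ i ∈ Finset.range (n+2), (-1)^i * ((n+1+i).choose (2*i) : ℂ) * w^(i+1) := by
    rw [Tsum, Finset.mul_sum]
    exact Finset.sum_congr rfl fun i _ => by ring
  rw [hw, hTn, hT1, Tsum]
  rw [Finset.sum_range_succ' (fun m => (-1:ℂ)^m * ((n+2+m).choose (2*m) : ℂ) * w^m) (n+2),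
      Finset.sum_range_succ' (fun m => (-1:ℂ)^m * ((n+m).choose (2*m) : ℂ) * w^m) (n+2),
      Finset.sum_range_succ' (fun m => (-1:ℂ)^m * ((n+1+m).choose (2*m) : ℂ) * w^m) (n+2)]
  simp only [Nat.add_zero, Nat.mul_zero, Nat.choose_zero_right, pow_zero, Nat.cast_one,
    mul_one, one_mul]
  have hterm : ∀ i ∈ Finset.range (n+2),
      ((-1:ℂ)^(i+1) * ((n+2+(i+1)).choose (2*(i+1)) : ℂ) * w^(i+1)
        + (-1)^(i+1) * ((n+(i+1)).choose (2*(i+1)) : ℂ) * w^(i+1)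
        + (-1)^i * ((n+1+i).choose (2*i) : ℂ) * w^(i+1))
      = 2 * ((-1)^(i+1) * ((n+1+(i+1)).choose (2*(i+1)) : ℂ) * w^(i+1)) := by
    intro i _
    have h := pascal3 n i
    rw [show n+2+(i+1) = n+i+1+1+1 from by omega, show 2*(i+1) = 2*i+1+1 from by omega,
        show n+(i+1) = n+i+1 from by omega, show n+1+(i+1) = n+i+1+1 from by omega,
        show n+1+i = n+i+1 from by omega]
    have hc : ((n+i+1+1+1).choose (2*i+1+1) : ℂ) + ((n+i+1).choose (2*i+1+1) : ℂ)
        = 2 * ((n+i+1+1).choose (2*i+1+1) : ℂ) + ((n+i+1).choose (2*i) : ℂ) := by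
      exact_mod_cast congrArg (Nat.cast (R := ℂ)) h
    linear_combination ((-1:ℂ))^(i+1) * w^(i+1) * hc
  have key := Finset.sum_congr rfl hterm
  rw [Finset.sum_add_distrib, Finset.sum_add_distrib, ← Finset.mul_sum] at key
  linear_combination key

lemma main_aux (z : ℂ) (hz : z ≠ 0) (n : ℕ) :
    z^(n+1) + (z^(n+1))⁻¹ = Tsum (2 - z - z⁻¹) (n+1) + Tsum (2 - z - z⁻¹) n := by
  set w := 2 - z - z⁻¹ with hwdef
  have base0 : z^1 + (z^1)⁻¹ = Tsum w 1 + Tsum w 0 := by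
    simp only [Tsum, Finset.sum_range_succ, Finset.sum_range_zero]
    norm_num
    field_simp [hwdef]
    rw [hwdef]
    field_simp
    ring
  have base1 : z^2 + (z^2)⁻¹ = Tsum w 2 + Tsum w 1 := by
    simp only [Tsum, Finset.sum_range_succ, Finset.sum_range_zero]
    norm_num [Nat.choose]
    field_simp [hwdef]
    rw [hwdef]
    field_simp
    ring
  have step : ∀ k, z^(k+1) + (z^(k+1))⁻¹ = Tsum w (k+1) + Tsum w k →
      z^(k+2) + (z^(k+2))⁻¹ = Tsum w (k+2) + Tsum w (k+1) →
      z^(k+3) + (z^(k+3))⁻¹ = Tsum w (k+3) + Tsum w (k+2) := by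
    intro k ih0 ih1
    have hzpow : ∀ j : ℕ, z ^ j ≠ 0 := fun j => pow_ne_zero j hz
    calc z^(k+3) + (z^(k+3))⁻¹
        = (2 - w) * (z^(k+2) + (z^(k+2))⁻¹) - (z^(k+1) + (z^(k+1))⁻¹) := by
          rw [hwdef]
          field_simp
          ring
      _ = (2 - w) * (Tsum w (k+2) + Tsum w (k+1)) - (Tsum w (k+1) + Tsum w k) := by
          rw [ih0, ih1]
      _ = Tsum w (k+3) + Tsum w (k+2) := by
          linear_combination - Trec w (k+1) - Trec w k
  have H : ∀ n, (z^(n+1) + (z^(n+1))⁻¹ = Tsum w (n+1) + Tsum w n) ∧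
      (z^(n+2) + (z^(n+2))⁻¹ = Tsum w (n+2) + Tsum w (n+1)) := by
    intro n
    induction n with
    | zero => exact ⟨base0, base1⟩
    | succ k ih => exact ⟨ih.2, step k ih.1 ih.2⟩
  exact (H n).1

theorem chebyshev_like_identity (ℓ : ℕ) (hℓ : 1 ≤ ℓ) (z : ℂ) (hz : z ≠ 0) :
    2 - z ^ ℓ - (z ^ ℓ)⁻¹ =
      ∑ m ∈ Finset.Icc 1 ℓ,
        ((ℓ : ℂ) / (m : ℂ)) * ((m + ℓ - 1).choose (2 * m - 1) : ℂ) * (-1) ^ (m + 1) *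
          (2 - z - z⁻¹) ^ m := by
  obtain ⟨L, rfl⟩ : ∃ L, ℓ = L + 1 := ⟨ℓ - 1, by omega⟩
  have hmain := main_aux z hz L
  rw [sub_sub, hmain]
  rw [← Finset.Ico_add_one_right_eq_Icc, Finset.sum_Ico_eq_sum_range]
  have hrange : L + 1 + 1 - 1 = L + 1 := by omega
  rw [hrange]
  set w := 2 - z - z⁻¹ with hwdef
  have hper : ∀ i ∈ Finset.range (L+1),
      ((L+1 : ℕ) : ℂ) / ((1+i : ℕ) : ℂ) * (((1+i+(L+1)-1).choose (2*(1+i)-1) : ℕ) : ℂ)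
        * (-1)^(1+i+1) * w^(1+i)
      = (-1:ℂ)^i * (((L+1+(i+1)).choose (2*(i+1)) : ℂ) + ((L+(i+1)).choose (2*(i+1)) : ℂ))
          * w^(i+1) := by
    intro i _
    have habs := absorb L i
    have hcast : ((L:ℂ)+1) * ((L+i+1).choose (2*i+1) : ℂ)
        = ((i:ℂ)+1) * (((L+i+1+1).choose (2*i+1+1) : ℂ) + ((L+i+1).choose (2*i+1+1) : ℂ)) := by
      exact_mod_cast congrArg (Nat.cast (R := ℂ)) habs
    rw [show 1+i+(L+1)-1 = L+i+1 from by omega, show 2*(1+i)-1 = 2*i+1 from by omega,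
        show L+1+(i+1) = L+i+1+1 from by omega, show 2*(i+1) = 2*i+1+1 from by omega,
        show L+(i+1) = L+i+1 from by omega, show 1+i+1 = i+2 from by omega,
        show 1+i = i+1 from by omega]
    have hne : ((i:ℂ)+1) ≠ 0 := Nat.cast_add_one_ne_zero i
    push_cast
    field_simp
    linear_combination ((-1:ℂ))^i * w^(i+1) * hcast
  rw [Finset.sum_congr rfl hper]
  have e1 : Tsum w (L+1)
      = 1 + ∑ i ∈ Finset.range (L+1), (-1:ℂ)^(i+1) * ((L+1+(i+1)).choose (2*(i+1)) : ℂ)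
          * w^(i+1) := by
    rw [Tsum, Finset.sum_range_succ'
        (fun m => (-1:ℂ)^m * ((L+1+m).choose (2*m) : ℂ) * w^m) (L+1)]
    simp [add_comm]
  have e2 : Tsum w L
      = 1 + ∑ i ∈ Finset.range (L+1), (-1:ℂ)^(i+1) * ((L+(i+1)).choose (2*(i+1)) : ℂ)
          * w^(i+1) := by
    have hext : Tsum w L
        = ∑ m ∈ Finset.range (L+2), (-1:ℂ)^m * ((L+m).choose (2*m) : ℂ) * w^m := by
      rw [show L+2 = (L+1)+1 from rfl, Finset.sum_range_succ,
          Nat.choose_eq_zero_of_lt (by omega)]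
      simp [Tsum]
    rw [hext, Finset.sum_range_succ'
        (fun m => (-1:ℂ)^m * ((L+m).choose (2*m) : ℂ) * w^m) (L+1)]
    simp [add_comm]
  have hcomb : ∀ x ∈ Finset.range (L+1),
      (-1:ℂ)^x * (((L+1+(x+1)).choose (2*(x+1)) : ℂ) + ((L+(x+1)).choose (2*(x+1)) : ℂ))
          * w^(x+1)
      = -(((-1:ℂ)^(x+1) * ((L+1+(x+1)).choose (2*(x+1)) : ℂ) * w^(x+1))
          + ((-1:ℂ)^(x+1) * ((L+(x+1)).choose (2*(x+1)) : ℂ) * w^(x+1))) := by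
    intro x _
    ring
  rw [e1, e2, Finset.sum_congr rfl hcomb, Finset.sum_neg_distrib, Finset.sum_add_distrib]
  ring
end

section
/- Let n ≥ 3 and z ∈ ℂ*. Let Δ be the n×n complex matrix with Δ_{i,i} = 2 for all i, Δ_{i,i+1} = Δ_{i+1,i} = −1 for 1 ≤ i ≤ n−1, Δ_{n,1} = −z, Δ_{1,n} = −z^{−1}, and all other entries 0. Then det Δ = 2 − z − z^{−1} = Π_{ζ : ζ^n = z} (2 − ζ − ζ^{−1}), the product over the n-th roots ζ of z. -/
/-!
Statement 17: the line-bundle Laplacian of the n-cycle with monodromy `z` has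
determinant `2 − z − z⁻¹ = Π_{ζ^n = z} (2 − ζ − ζ⁻¹)`.
-/

open Polynomial Multiset in

lemma prod_side (n : ℕ) (hn : 3 ≤ n) (z : ℂ) (hz : z ≠ 0) :
    ((Polynomial.nthRoots n z).map fun ζ => 2 - ζ - ζ⁻¹).prod = 2 - z - z⁻¹ := by
  have hn0 : n ≠ 0 := by omega
  set p : ℂ[X] := X ^ n - C z with hp
  have hmonic : p.Monic := monic_X_pow_sub_C z hn0
  have hsplits : Splits p := IsAlgClosed.splits p
  have hroots : p.roots = nthRoots n z := rfl
  have hfact : p = (p.roots.map fun a => X - C a).prod :=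
    hsplits.eq_prod_roots_of_monic hmonic
  have hcard : Multiset.card p.roots = n := by
    have h := (splits_iff_card_roots (f := p)).1 hsplits
    have hd : p.natDegree = n := by
      rw [hp]; exact natDegree_X_pow_sub_C
    rw [hd] at h; exact h
  have heval1 : 1 - z = ((p.roots.map fun a => 1 - a)).prod := by
    have := congrArg (eval 1) hfact
    rw [hp] at this
    simpa [eval_multiset_prod, Multiset.map_map, Function.comp] using this
  have heval0 : -z = ((p.roots.map fun a => -a)).prod := by
    have := congrArg (eval 0) hfact
    rw [hp] at this
    simpa [eval_multiset_prod, Multiset.map_map, Function.comp, hn0] using this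
  have hprod0 : p.roots.prod = (-1 : ℂ) ^ n * (-z) := by
    have : ((p.roots.map fun a => -a)).prod = (-1 : ℂ) ^ n * p.roots.prod := by
      have : (p.roots.map fun a => -a) = p.roots.map fun a => (-1) * a := by
        simp [Multiset.map_congr]
      rw [this, Multiset.prod_map_mul]
      simp [hcard]
    rw [this] at heval0
    have hpow : ((-1 : ℂ) ^ n) * ((-1 : ℂ) ^ n) = 1 := by
      rw [← pow_add]; exact Even.neg_one_pow ⟨n, rfl⟩
    calc p.roots.prod = ((-1:ℂ)^n * (-1:ℂ)^n) * p.roots.prod := by rw [hpow, one_mul]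
      _ = (-1:ℂ)^n * ((-1:ℂ)^n * p.roots.prod) := by ring
      _ = (-1:ℂ)^n * (-z) := by rw [← heval0]
  have hne : ∀ ζ ∈ p.roots, ζ ≠ 0 := by
    intro ζ hζ
    have := (mem_nthRoots (by omega : 0 < n)).1 (hroots ▸ hζ)
    intro h0; apply hz; rw [← this, h0, zero_pow hn0]
  have hmapeq : (p.roots.map fun ζ => 2 - ζ - ζ⁻¹)
      = p.roots.map fun ζ => (-1) * ((1 - ζ) * (1 - ζ)) * ζ⁻¹ := by
    refine Multiset.map_congr rfl ?_
    intro ζ hζ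
    have h0 := hne ζ hζ
    field_simp
    ring
  rw [← hroots, hmapeq]
  rw [show (fun ζ : ℂ => (-1) * ((1 - ζ) * (1 - ζ)) * ζ⁻¹)
      = fun ζ : ℂ => ((-1) * ((1 - ζ) * (1 - ζ))) * ζ⁻¹ from rfl]
  rw [Multiset.prod_map_mul, Multiset.prod_map_mul, Multiset.prod_map_mul]
  rw [Multiset.prod_map_inv]
  have hconst : (p.roots.map fun _ : ℂ => (-1 : ℂ)).prod = (-1 : ℂ) ^ n := by
    simp [Multiset.map_const', hcard]
  have hid : (p.roots.map fun ζ : ℂ => ζ) = p.roots := Multiset.map_id _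
  rw [hconst, hid, ← heval1, hprod0]
  have h1 : ((-1:ℂ)^n * -z)⁻¹ = ((-1:ℂ)^n)⁻¹ * (-z)⁻¹ := by rw [mul_inv]
  have h2 : ((-1:ℂ)^n)⁻¹ = (-1:ℂ)^n := by
    rw [← inv_pow]; norm_num
  rw [h1, h2]
  have hpow : ((-1 : ℂ) ^ n) * ((-1 : ℂ) ^ n) = 1 := by
    rw [← pow_add]; exact Even.neg_one_pow ⟨n, rfl⟩
  calc (-1:ℂ)^n * ((1 - z) * (1 - z)) * ((-1:ℂ)^n * (-z)⁻¹)
      = ((-1:ℂ)^n * (-1:ℂ)^n) * (((1 - z) * (1 - z)) * (-z)⁻¹) := by ring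
    _ = ((1 - z) * (1 - z)) * (-z)⁻¹ := by rw [hpow, one_mul]
    _ = 2 - z - z⁻¹ := by rw [inv_neg]; field_simp; ring


namespace Det17

variable (m : ℕ) (z : ℂ)

def sg (m : ℕ) : Equiv.Perm (Fin (m+3)) := Equiv.addRight 1
def tu (m : ℕ) : Equiv.Perm (Fin (m+3)) := Equiv.subRight 1

def wt (m : ℕ) (z : ℂ) : Fin (m+3) → ℂ := fun i => if (i : ℕ) = m + 2 then z else 1

noncomputable def S : Matrix (Fin (m+3)) (Fin (m+3)) ℂ := Matrix.diagonal (wt m z) * (sg m).permMatrix ℂ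
noncomputable def T : Matrix (Fin (m+3)) (Fin (m+3)) ℂ :=
  (tu m).permMatrix ℂ * Matrix.diagonal (fun i => (wt m z i)⁻¹)

lemma sg_apply (i : Fin (m+3)) : sg m i = i + 1 := rfl
lemma tu_apply (i : Fin (m+3)) : tu m i = i - 1 := rfl

lemma tu_eq_inv : tu m = (sg m)⁻¹ := by
  ext i
  simp [tu, sg, Equiv.Perm.inv_def, Equiv.symm_apply_eq, Equiv.subRight_apply,
    Equiv.coe_addRight, sub_add_cancel, sub_eq_add_neg]

lemma one_ne_zero' : (1 : Fin (m+3)) ≠ 0 := by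
  simp [Fin.ext_iff]

lemma S_apply (i j : Fin (m+3)) : S m z i j = if i + 1 = j then wt m z i else 0 := by
  simp [S, Matrix.diagonal_mul, PEquiv.toMatrix_apply, Equiv.toPEquiv_apply, sg_apply,
    Option.mem_def, mul_ite, mul_one, mul_zero, eq_comm]

lemma T_apply (i j : Fin (m+3)) : T m z i j = if i = j + 1 then (wt m z j)⁻¹ else 0 := by
  have h : (tu m i = j) = (i = j + 1) := by
    rw [tu_apply, sub_eq_iff_eq_add]
  simp only [T, Matrix.mul_diagonal, PEquiv.toMatrix_apply, Equiv.toPEquiv_apply,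
    Option.mem_def, Option.some_inj, ite_mul, one_mul, zero_mul, eq_comm (a := j), h]

lemma wt_ne_zero (hz : z ≠ 0) (i : Fin (m+3)) : wt m z i ≠ 0 := by
  unfold wt; split <;> simp [hz]

lemma TS (hz : z ≠ 0) : T m z * S m z = 1 := by
  unfold T S
  rw [Matrix.mul_assoc, ← Matrix.mul_assoc (Matrix.diagonal _), Matrix.diagonal_mul_diagonal]
  have h1 : (fun i => (wt m z i)⁻¹ * wt m z i) = fun _ => (1 : ℂ) := by
    funext i; exact inv_mul_cancel₀ (wt_ne_zero m z hz i)
  rw [h1, Matrix.diagonal_one, Matrix.one_mul, tu_eq_inv]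
  rw [Equiv.Perm.permMatrix, Equiv.Perm.permMatrix, ← PEquiv.toMatrix_trans,
    ← Equiv.toPEquiv_trans]
  have h2 : ((sg m)⁻¹ : Equiv.Perm (Fin (m+3))).trans (sg m) = Equiv.refl _ := by
    ext i; simp [Equiv.Perm.inv_def]
  rw [h2, Equiv.toPEquiv_refl, PEquiv.toMatrix_refl]

lemma prod_wt : ∏ i, wt m z i = z := by
  unfold wt
  have h : ∀ i : Fin (m+3), ((i : ℕ) = m + 2) = (i = Fin.last (m+2)) := by
    intro i; rw [eq_iff_iff, Fin.ext_iff]; simp [Fin.last]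
  simp only [h]
  simp

lemma sign_sg : Equiv.Perm.sign (sg m) = (-1 : ℤˣ) ^ (m + 2) := by
  have hsg : sg m = finRotate (m+3) := by
    ext i; rw [sg_apply, finRotate_succ_apply]
  rw [hsg, sign_finRotate]
  rfl

lemma sign_tu : Equiv.Perm.sign (tu m) = (-1 : ℤˣ) ^ (m + 2) := by
  rw [tu_eq_inv, Equiv.Perm.sign_inv, sign_sg]

lemma det_T (hz : z ≠ 0) : (T m z).det = (-1 : ℂ) ^ (m + 2) * z⁻¹ := by
  unfold T
  rw [Matrix.det_mul, Matrix.det_diagonal, Matrix.det_permutation, sign_tu]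
  rw [Finset.prod_inv_distrib, prod_wt]
  push_cast
  ring

open Fin.NatCast in
lemma cascade (π : Equiv.Perm (Fin (m+3))) (h : ∀ i, π i = i ∨ π i = i - 1)
    (hne : π ≠ 1) : ∀ i, π i = i - 1 := by
  obtain ⟨i₀, hi₀⟩ : ∃ i, π i ≠ i := by
    by_contra hc
    push_neg at hc
    exact hne (Equiv.ext fun i => hc i)
  have h0 : π i₀ = i₀ - 1 := (h i₀).resolve_left hi₀
  have key : ∀ k : ℕ, π (i₀ - (k : Fin (m+3))) = i₀ - (k : Fin (m+3)) - 1 := by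
    intro k
    induction k with
    | zero => simpa using h0
    | succ k ih =>
      have hsub : i₀ - ((k+1 : ℕ) : Fin (m+3)) = i₀ - ((k : ℕ) : Fin (m+3)) - 1 := by
        push_cast; abel
      rcases h (i₀ - ((k : ℕ) : Fin (m+3)) - 1) with hf | hs
      · exfalso
        have heq : i₀ - ((k : ℕ) : Fin (m+3)) - 1 = i₀ - ((k : ℕ) : Fin (m+3)) :=
          π.injective (hf.trans ih.symm)
        exact one_ne_zero' m (sub_eq_self.mp heq)
      · rw [hsub, hs]
  intro j
  have hj : j = i₀ - (((i₀ - j : Fin (m+3)) : ℕ) : Fin (m+3)) := by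
    rw [Fin.cast_val_eq_self]
    exact (sub_sub_cancel i₀ j).symm
  rw [hj]
  exact key _

lemma tu_ne_one : tu m ≠ 1 := by
  intro hc
  have h0 : tu m 0 = 0 := by rw [hc]; rfl
  rw [tu_apply] at h0
  exact one_ne_zero' m (sub_eq_self.mp h0)

lemma det_S_sub_one (hz : z ≠ 0) :
    (S m z - 1).det = (-1 : ℂ) ^ (m+3) * (1 - z) := by
  have hM : ∀ i j : Fin (m+3),
      (S m z - 1) i j = (if i + 1 = j then wt m z i else 0) - (if i = j then 1 else 0) := by
    intro i j
    rw [Matrix.sub_apply, S_apply, Matrix.one_apply]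
  rw [Matrix.det_apply]
  have hpair : ({1, tu m} : Finset (Equiv.Perm (Fin (m+3)))) ⊆ Finset.univ :=
    Finset.subset_univ _
  rw [← Finset.sum_subset hpair ?hzero]
  · rw [Finset.sum_pair (Ne.symm (tu_ne_one m))]
    have hterm1 : ∀ i : Fin (m+3), (S m z - 1) i i = -1 := by
      intro i
      rw [hM]
      rw [if_neg, if_pos rfl, zero_sub]
      intro hc
      exact one_ne_zero' m (add_eq_left.mp hc)
    have hterm2 : ∀ i : Fin (m+3), (S m z - 1) (tu m i) i = wt m z (tu m i) := by
      intro i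
      rw [hM, tu_apply]
      rw [if_pos (sub_add_cancel i 1), if_neg, sub_zero]
      intro hc
      exact one_ne_zero' m (sub_eq_self.mp hc)
    have hp1 : ∏ i, (S m z - 1) ((1 : Equiv.Perm (Fin (m+3))) i) i = (-1 : ℂ) ^ (m+3) := by
      simp only [Equiv.Perm.coe_one, id_eq, hterm1]
      rw [Finset.prod_const]
      simp
    have hp2 : ∏ i, (S m z - 1) (tu m i) i = z := by
      simp only [hterm2]
      rw [Equiv.prod_comp (tu m) (wt m z), prod_wt]
    rw [hp1, hp2, sign_tu, Equiv.Perm.sign_one]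
    simp only [one_smul, Units.smul_def, Units.val_pow_eq_pow_val, Units.val_neg, Units.val_one,
      zsmul_eq_mul]
    push_cast
    rw [pow_succ]
    ring
  · intro π _ hπ
    simp only [Finset.mem_insert, Finset.mem_singleton, not_or] at hπ
    obtain ⟨hπ1, hπτ⟩ := hπ
    have hnot : ¬ ∀ i, π i = i ∨ π i = i - 1 := by
      intro hall
      exact hπτ (Equiv.ext fun i => (cascade m π hall hπ1 i).trans (tu_apply m i).symm)
    push_neg at hnot
    obtain ⟨i, hi1, hi2⟩ := hnot
    have hMi : (S m z - 1) (π i) i = 0 := by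
      rw [hM]
      rw [if_neg, if_neg hi1, sub_zero]
      intro hc
      exact hi2 (eq_sub_iff_add_eq.mpr hc)
    rw [Finset.prod_eq_zero (f := fun j => (S m z - 1) (π j) j) (Finset.mem_univ i) hMi, smul_zero]

lemma det_Delta (hz : z ≠ 0) :
    ((2:ℂ) • (1 : Matrix (Fin (m+3)) (Fin (m+3)) ℂ) - S m z - T m z).det = 2 - z - z⁻¹ := by
  have hfact : (2:ℂ) • (1 : Matrix (Fin (m+3)) (Fin (m+3)) ℂ) - S m z - T m z
      = -(T m z * (S m z - 1)^2) := by
    have h : T m z * S m z = 1 := TS m z hz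
    have e : T m z * (S m z - 1)^2
        = T m z * S m z * S m z - T m z * S m z - T m z * S m z + T m z := by
      noncomm_ring
    rw [e, h, one_mul, two_smul]
    abel
  rw [hfact, Matrix.det_neg, Matrix.det_mul, Matrix.det_pow]
  rw [det_T m z hz, det_S_sub_one m z hz]
  simp only [Fintype.card_fin]
  have h1 : (-1:ℂ)^(m+3) * (-1:ℂ)^(m+2) = -1 := by
    rw [← pow_add]
    exact Odd.neg_one_pow ⟨m+2, by ring⟩
  have h2 : ((-1:ℂ)^(m+3))^2 = 1 := by
    rw [← pow_mul]
    exact Even.neg_one_pow ⟨m+3, by ring⟩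
  calc (-1:ℂ)^(m+3) * ((-1:ℂ)^(m+2) * z⁻¹ * ((-1:ℂ)^(m+3) * (1-z))^2)
      = ((-1:ℂ)^(m+3) * (-1:ℂ)^(m+2)) * ((-1:ℂ)^(m+3))^2 * (z⁻¹ * (1-z)^2) := by ring
    _ = -(z⁻¹ * (1-z)^2) := by rw [h1, h2]; ring
    _ = 2 - z - z⁻¹ := by field_simp; ring

lemma delta_entry (m : ℕ) (z : ℂ) (i j : Fin (m+3)) :
    (if i = j then (2 : ℂ)
      else if (i : ℕ) + 1 = (j : ℕ) then -1
      else if (j : ℕ) + 1 = (i : ℕ) then -1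
      else if (i : ℕ) = m + 3 - 1 ∧ (j : ℕ) = 0 then -z
      else if (i : ℕ) = 0 ∧ (j : ℕ) = m + 3 - 1 then -z⁻¹
      else 0)
    = (2:ℂ) * (if i = j then 1 else 0)
      - (if i + 1 = j then wt m z i else 0)
      - (if i = j + 1 then (wt m z j)⁻¹ else 0) := by
  have hiv := i.isLt
  have hjv := j.isLt
  have e1 : ((i+1 : Fin (m+3)) : ℕ) = if (i:ℕ) = m+2 then 0 else (i:ℕ)+1 := by
    have h : ((i+1 : Fin (m+3)) : ℕ) = ((i:ℕ) + 1) % (m+3) := by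
      simp [Fin.add_def]
    rw [h]; split_ifs with hc
    · rw [hc, show m+2+1 = m+3 from rfl, Nat.mod_self]
    · exact Nat.mod_eq_of_lt (by omega)
  have e2 : ((j+1 : Fin (m+3)) : ℕ) = if (j:ℕ) = m+2 then 0 else (j:ℕ)+1 := by
    have h : ((j+1 : Fin (m+3)) : ℕ) = ((j:ℕ) + 1) % (m+3) := by
      simp [Fin.add_def]
    rw [h]; split_ifs with hc
    · rw [hc, show m+2+1 = m+3 from rfl, Nat.mod_self]
    · exact Nat.mod_eq_of_lt (by omega)
  have hA : (i + 1 = j) ↔ ((i:ℕ)+1 = (j:ℕ) ∨ ((i:ℕ) = m+2 ∧ (j:ℕ) = 0)) := by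
    rw [Fin.ext_iff, e1]
    split_ifs with h
    · constructor
      · intro hh; exact Or.inr ⟨h, hh.symm⟩
      · intro hh; omega
    · constructor
      · intro hh; exact Or.inl hh
      · intro hh; omega
  have hB : (i = j + 1) ↔ ((j:ℕ)+1 = (i:ℕ) ∨ ((j:ℕ) = m+2 ∧ (i:ℕ) = 0)) := by
    rw [Fin.ext_iff, e2]
    split_ifs with h
    · constructor
      · intro hh; exact Or.inr ⟨h, hh⟩
      · intro hh; omega
    · constructor
      · intro hh; exact Or.inl hh.symm
      · intro hh; omega
  have hIJ : (i = j) ↔ ((i:ℕ) = (j:ℕ)) := Fin.ext_iff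
  rw [if_congr hA rfl rfl, if_congr hB rfl rfl, if_congr hIJ rfl rfl,
    if_congr hIJ rfl rfl]
  unfold wt
  have h31 : m + 3 - 1 = m + 2 := rfl
  rw [h31]
  split_ifs <;>
    first
      | (norm_num; done)
      | omega
      | (exfalso; omega)

end Det17


theorem det_cycle_lineLaplacian (n : ℕ) (hn : 3 ≤ n) (z : ℂ) (hz : z ≠ 0) :
    (Matrix.of fun i j : Fin n =>
        if i = j then (2 : ℂ)
        else if (i : ℕ) + 1 = (j : ℕ) then -1
        else if (j : ℕ) + 1 = (i : ℕ) then -1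
        else if (i : ℕ) = n - 1 ∧ (j : ℕ) = 0 then -z
        else if (i : ℕ) = 0 ∧ (j : ℕ) = n - 1 then -z⁻¹
        else 0).det = 2 - z - z⁻¹ ∧
    (Matrix.of fun i j : Fin n =>
        if i = j then (2 : ℂ)
        else if (i : ℕ) + 1 = (j : ℕ) then -1
        else if (j : ℕ) + 1 = (i : ℕ) then -1
        else if (i : ℕ) = n - 1 ∧ (j : ℕ) = 0 then -z
        else if (i : ℕ) = 0 ∧ (j : ℕ) = n - 1 then -z⁻¹
        else 0).det =
      ((Polynomial.nthRoots n z).map fun ζ => 2 - ζ - ζ⁻¹).prod := by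
  obtain ⟨m, rfl⟩ : ∃ m, n = m + 3 := ⟨n - 3, by omega⟩
  have hdelta : (Matrix.of fun i j : Fin (m+3) =>
        if i = j then (2 : ℂ)
        else if (i : ℕ) + 1 = (j : ℕ) then -1
        else if (j : ℕ) + 1 = (i : ℕ) then -1
        else if (i : ℕ) = m + 3 - 1 ∧ (j : ℕ) = 0 then -z
        else if (i : ℕ) = 0 ∧ (j : ℕ) = m + 3 - 1 then -z⁻¹
        else 0)
      = (2:ℂ) • (1 : Matrix (Fin (m+3)) (Fin (m+3)) ℂ) - Det17.S m z - Det17.T m z := by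
    ext i j
    rw [Matrix.of_apply, Matrix.sub_apply, Matrix.sub_apply, Matrix.smul_apply,
      Matrix.one_apply, Det17.S_apply, Det17.T_apply, smul_eq_mul]
    exact Det17.delta_entry m z i j
  have hdet : (Matrix.of fun i j : Fin (m+3) =>
        if i = j then (2 : ℂ)
        else if (i : ℕ) + 1 = (j : ℕ) then -1
        else if (j : ℕ) + 1 = (i : ℕ) then -1
        else if (i : ℕ) = m + 3 - 1 ∧ (j : ℕ) = 0 then -z
        else if (i : ℕ) = 0 ∧ (j : ℕ) = m + 3 - 1 then -z⁻¹
        else 0).det = 2 - z - z⁻¹ := by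
    rw [hdelta]
    exact Det17.det_Delta m z hz
  exact ⟨hdet, hdet.trans (prod_side (m+3) (by omega) z hz).symm⟩
end
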